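/- A linear map u : H_4 → H_4 is a Hopf algebra morphism if and only if either u is the trivial morphism u(h) = ε(h)1 for all h ∈ H_4, or there exists β ∈ k such that u(1) = 1, u(g) = g, u(x) = βx, and u(gx) = βgx. -/

import Mathlib

open TensorProduct

noncomputable section

/-- A linear map between coalgebras is a coalgebra morphism if it commutes with
counits and comultiplications. -/
def IsCoalgebraMap (k : Type*) [CommRing k] {A B : Type*} [AddCommGroup A] [Module k A]
    [Coalgebra k A] [AddCommGroup B] [Module k B] [Coalgebra k B] (u : A →ₗ[k] B) : Prop :=
  Coalgebra.counit (R := k) ∘ₗ u = Coalgebra.counit (R := k) ∧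
    Coalgebra.comul (R := k) ∘ₗ u = TensorProduct.map u u ∘ₗ Coalgebra.comul (R := k)

/-- `H` is (a model of) Sweedler's 4-dimensional Hopf algebra `H₄` with generators `g`, `x`:
`g² = 1`, `x² = 0`, `xg = -gx`, the family `{1, g, x, gx}` is a basis of `H`, `g` is
group-like, `x` is `(1, g)`-primitive, and `S(g) = g`, `S(x) = -gx`. -/
structure IsSweedler (k : Type*) [CommRing k] (H : Type*) [Ring H] [HopfAlgebra k H]
    (g x : H) : Prop where
  g_sq : g * g = 1
  x_sq : x * x = 0
  x_mul_g : x * g = -(g * x)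
  li : LinearIndependent k ![(1 : H), g, x, g * x]
  span : Submodule.span k {(1 : H), g, x, g * x} = ⊤
  comul_g : Coalgebra.comul (R := k) g = g ⊗ₜ[k] g
  comul_x : Coalgebra.comul (R := k) x = x ⊗ₜ[k] (1 : H) + g ⊗ₜ[k] x
  counit_g : Coalgebra.counit (R := k) g = 1
  counit_x : Coalgebra.counit (R := k) x = 0
  antipode_g : HopfAlgebra.antipode (R := k) g = g
  antipode_x : HopfAlgebra.antipode (R := k) x = -(g * x)

namespace IsSweedler
variable {k : Type*} [Field k] {H : Type*} [Ring H] [HopfAlgebra k H] {g x : H}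

def basis (hs : IsSweedler k H g x) : Module.Basis (Fin 4) k H :=
  Module.Basis.mk hs.li (by
    have : Set.range ![(1 : H), g, x, g * x] = {(1 : H), g, x, g * x} := by
      ext y; simp [Matrix.range_cons, Matrix.range_empty]; tauto
    rw [this, hs.span])

lemma basis0 (hs : IsSweedler k H g x) : hs.basis 0 = 1 := by simp [basis]
lemma basis1 (hs : IsSweedler k H g x) : hs.basis 1 = g := by simp [basis]
lemma basis2 (hs : IsSweedler k H g x) : hs.basis 2 = x := by simp [basis]
lemma basis3 (hs : IsSweedler k H g x) : hs.basis 3 = g * x := by simp [basis]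

lemma expand (hs : IsSweedler k H g x) (v : H) :
    v = hs.basis.repr v 0 • (1 : H) + hs.basis.repr v 1 • g + hs.basis.repr v 2 • x +
      hs.basis.repr v 3 • (g * x) := by
  conv_lhs => rw [← hs.basis.sum_repr v]
  rw [Fin.sum_univ_four, hs.basis0, hs.basis1, hs.basis2, hs.basis3]

lemma coeffs_eq' {a b c d a' b' c' d' : k} (B : Module.Basis (Fin 4) k H)
    (h : a • B 0 + b • B 1 + c • B 2 + d • B 3 = a' • B 0 + b' • B 1 + c' • B 2 + d' • B 3) :
    a = a' ∧ b = b' ∧ c = c' ∧ d = d' := by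
  refine ⟨?_, ?_, ?_, ?_⟩
  · have := congrArg (fun v => B.repr v 0) h; simpa [Module.Basis.repr_self_apply] using this
  · have := congrArg (fun v => B.repr v 1) h; simpa [Module.Basis.repr_self_apply] using this
  · have := congrArg (fun v => B.repr v 2) h; simpa [Module.Basis.repr_self_apply] using this
  · have := congrArg (fun v => B.repr v 3) h; simpa [Module.Basis.repr_self_apply] using this

lemma coeffs_eq (hs : IsSweedler k H g x) {a b c d a' b' c' d' : k}
    (h : a • (1 : H) + b • g + c • x + d • (g * x) =
      a' • (1 : H) + b' • g + c' • x + d' • (g * x)) :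
    a = a' ∧ b = b' ∧ c = c' ∧ d = d' := by
  refine coeffs_eq' hs.basis ?_
  rw [hs.basis0, hs.basis1, hs.basis2, hs.basis3]; exact h

-- multiplication table
lemma g_gx (hs : IsSweedler k H g x) : g * (g * x) = x := by
  rw [← mul_assoc, hs.g_sq, one_mul]
lemma x_gx (hs : IsSweedler k H g x) : x * (g * x) = 0 := by
  rw [← mul_assoc, ← neg_neg (x * g), hs.x_mul_g, neg_neg, neg_mul, mul_assoc, hs.x_sq,
    mul_zero, neg_zero]
lemma gx_g (hs : IsSweedler k H g x) : (g * x) * g = -x := by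
  rw [mul_assoc, hs.x_mul_g, mul_neg, hs.g_gx]
lemma gx_x (hs : IsSweedler k H g x) : (g * x) * x = 0 := by
  rw [mul_assoc, hs.x_sq, mul_zero]
lemma gx_gx (hs : IsSweedler k H g x) : (g * x) * (g * x) = 0 := by
  rw [← mul_assoc, hs.gx_g, neg_mul, hs.x_sq, neg_zero]

lemma comul_gx (hs : IsSweedler k H g x) :
    Coalgebra.comul (R := k) (g * x) = (g * x) ⊗ₜ[k] g + (1 : H) ⊗ₜ[k] (g * x) := by
  rw [Bialgebra.comul_mul, hs.comul_g, hs.comul_x, mul_add,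
    Algebra.TensorProduct.tmul_mul_tmul, Algebra.TensorProduct.tmul_mul_tmul,
    mul_one, hs.g_sq]

lemma counit_gx (hs : IsSweedler k H g x) : Coalgebra.counit (R := k) (g * x) = 0 := by
  rw [Bialgebra.counit_mul, hs.counit_x, mul_zero]


lemma mul_ext (hs : IsSweedler k H g x) (u : H →ₗ[k] H)
    (h : ∀ i j : Fin 4, u (hs.basis i * hs.basis j) = u (hs.basis i) * u (hs.basis j)) :
    ∀ a b : H, u (a * b) = u a * u b := by
  have h1 : ∀ i : Fin 4, u ∘ₗ LinearMap.mulLeft k (hs.basis i) =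
      LinearMap.mulLeft k (u (hs.basis i)) ∘ₗ u :=
    fun i => hs.basis.ext fun j => by simpa using h i j
  have h2 : ∀ b : H, u ∘ₗ LinearMap.mulRight k b = LinearMap.mulRight k (u b) ∘ₗ u :=
    fun b => hs.basis.ext fun i => by simpa using LinearMap.congr_fun (h1 i) b
  exact fun a b => by simpa using LinearMap.congr_fun (h2 b) a

lemma map_one_tensor (u : H →ₗ[k] H) (hu1 : u 1 = 1) :
    TensorProduct.map u u (1 : H ⊗[k] H) = 1 := by
  rw [Algebra.TensorProduct.one_def, TensorProduct.map_tmul, hu1]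

lemma reverse (hs : IsSweedler k H g x) (u : H →ₗ[k] H)
    (h : (∀ h : H, u h = Coalgebra.counit (R := k) h • (1 : H)) ∨
        ∃ β : k, u 1 = 1 ∧ u g = g ∧ u x = β • x ∧ u (g * x) = β • (g * x)) :
    u 1 = 1 ∧ (∀ a b : H, u (a * b) = u a * u b) ∧ IsCoalgebraMap k u := by
  rcases h with h | ⟨β, hu1, hug, hux, hugx⟩
  · have hu1 : u 1 = 1 := by rw [h 1, Bialgebra.counit_one, one_smul]
    refine ⟨hu1, fun a b => ?_, ?_, ?_⟩
    · simp [h, Bialgebra.counit_mul, smul_smul, smul_mul_smul_comm, mul_comm]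
    · apply LinearMap.ext fun v => ?_
      simp [h]
    · refine hs.basis.ext fun i => ?_
      fin_cases i <;>
        simp [hs.basis0, hs.basis1, hs.basis2, hs.basis3, h, hs.comul_g, hs.comul_x,
          hs.comul_gx, hs.counit_g, hs.counit_x, hs.counit_gx, Algebra.TensorProduct.one_def,
          tmul_smul, smul_tmul']
  · refine ⟨hu1, hs.mul_ext u fun i j => ?_, ?_, ?_⟩
    · fin_cases i <;> fin_cases j <;>
        simp [hs.basis0, hs.basis1, hs.basis2, hs.basis3, hu1, hug, hux, hugx,
          hs.g_sq, hs.x_sq, hs.x_mul_g, hs.g_gx, hs.x_gx, hs.gx_g, hs.gx_x, hs.gx_gx,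
          smul_mul_assoc, mul_smul_comm, smul_smul, mul_comm]
    · refine hs.basis.ext fun i => ?_
      fin_cases i <;>
        simp [hs.basis0, hs.basis1, hs.basis2, hs.basis3, hu1, hug, hux, hugx,
          hs.counit_g, hs.counit_x, hs.counit_gx]
    · refine hs.basis.ext fun i => ?_
      fin_cases i <;>
        simp [hs.basis0, hs.basis1, hs.basis2, hs.basis3, hu1, hug, hux, hugx,
          hs.comul_g, hs.comul_x, hs.comul_gx, map_one_tensor u hu1,
          tmul_smul, smul_tmul', tmul_add, add_tmul]


set_option maxHeartbeats 1000000 in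
lemma ug_cases (hs : IsSweedler k H g x) (u : H →ₗ[k] H) (hu1 : u 1 = 1)
    (hc : IsCoalgebraMap k u) : u g = 1 ∨ u g = g := by
  obtain ⟨hcu, hcm⟩ := hc
  set B := hs.basis with hB
  have c0 : Coalgebra.comul (R := k) (B 0) = B 0 ⊗ₜ[k] B 0 := by
    rw [hs.basis0, Bialgebra.comul_one, Algebra.TensorProduct.one_def]
  have c1 : Coalgebra.comul (R := k) (B 1) = B 1 ⊗ₜ[k] B 1 := by
    rw [hs.basis1, hs.comul_g]
  have c2 : Coalgebra.comul (R := k) (B 2) = B 2 ⊗ₜ[k] B 0 + B 1 ⊗ₜ[k] B 2 := by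
    rw [hs.basis2, hs.basis1, hs.basis0, hs.comul_x]
  have c3 : Coalgebra.comul (R := k) (B 3) = B 3 ⊗ₜ[k] B 1 + B 0 ⊗ₜ[k] B 3 := by
    rw [hs.basis3, hs.basis1, hs.basis0, hs.comul_gx]
  obtain ⟨a, b, c, d, hug⟩ : ∃ a b c d : k, u g = a • B 0 + b • B 1 + c • B 2 + d • B 3 :=
    ⟨_, _, _, _, by rw [hs.basis0, hs.basis1, hs.basis2, hs.basis3]; exact hs.expand (u g)⟩
  have hcg : Coalgebra.comul (R := k) (a • B 0 + b • B 1 + c • B 2 + d • B 3) =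
      (a • B 0 + b • B 1 + c • B 2 + d • B 3) ⊗ₜ[k] (a • B 0 + b • B 1 + c • B 2 + d • B 3) := by
    rw [← hug]
    have := LinearMap.congr_fun hcm g
    simpa [hs.comul_g] using this
  have ext : ∀ p q : Fin 4, _ := fun p q =>
    congrArg (fun z => (B.tensorProduct B).repr z (p, q)) hcg
  have e20 := ext 2 0
  have e02 := ext 0 2
  have e03 := ext 0 3
  have e30 := ext 3 0
  have e00 := ext 0 0
  have e01 := ext 0 1
  simp only [map_add, map_smul, c0, c1, c2, c3, add_tmul, tmul_add, smul_tmul', tmul_smul,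
    Module.Basis.tensorProduct_repr_tmul_apply, Module.Basis.repr_self_apply, Finsupp.add_apply,
    Finsupp.smul_apply, smul_eq_mul] at e20 e02 e03 e30 e00 e01
  simp only [Fin.reduceEq, reduceIte, if_true, if_false, mul_zero, zero_mul, mul_one, one_mul, add_zero, zero_add] at e20 e02 e03 e30 e00 e01
  have hεg : Coalgebra.counit (R := k) (a • B 0 + b • B 1 + c • B 2 + d • B 3) = 1 := by
    rw [← hug]
    have := LinearMap.congr_fun hcu g
    simpa [hs.counit_g] using this
  have ε0 : Coalgebra.counit (R := k) (B 0) = 1 := by rw [hs.basis0]; exact Bialgebra.counit_one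
  have ε1 : Coalgebra.counit (R := k) (B 1) = 1 := by rw [hs.basis1]; exact hs.counit_g
  have ε2 : Coalgebra.counit (R := k) (B 2) = 0 := by rw [hs.basis2]; exact hs.counit_x
  have ε3 : Coalgebra.counit (R := k) (B 3) = 0 := by rw [hs.basis3]; exact hs.counit_gx
  simp only [map_add, map_smul, ε0, ε1, ε2, ε3, smul_eq_mul, mul_one, mul_zero, add_zero] at hεg
  have hc0 : c = 0 := by linear_combination e20 - e02
  have hd0 : d = 0 := by linear_combination e03 - e30
  have ha : a * (a - 1) = 0 := by linear_combination -e00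
  rcases mul_eq_zero.mp ha with ha0 | ha1
  · right
    have hb : b = 1 := by linear_combination hεg - ha0
    rw [hug, ha0, hb, hc0, hd0, hs.basis1]
    simp
  · left
    have ha' : a = 1 := by linear_combination ha1
    have hb : b = 0 := by linear_combination hεg - ha1
    rw [hug, ha', hb, hc0, hd0, hs.basis0]
    simp

set_option maxHeartbeats 1000000 in
lemma ux_of_ug_one (hs : IsSweedler k H g x) (u : H →ₗ[k] H) (hu1 : u 1 = 1)
    (hug : u g = 1) (hchar : (2 : k) ≠ 0) (hc : IsCoalgebraMap k u) : u x = 0 := by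
  obtain ⟨hcu, hcm⟩ := hc
  set B := hs.basis with hB
  have c0 : Coalgebra.comul (R := k) (B 0) = B 0 ⊗ₜ[k] B 0 := by
    rw [hs.basis0, Bialgebra.comul_one, Algebra.TensorProduct.one_def]
  have c1 : Coalgebra.comul (R := k) (B 1) = B 1 ⊗ₜ[k] B 1 := by
    rw [hs.basis1, hs.comul_g]
  have c2 : Coalgebra.comul (R := k) (B 2) = B 2 ⊗ₜ[k] B 0 + B 1 ⊗ₜ[k] B 2 := by
    rw [hs.basis2, hs.basis1, hs.basis0, hs.comul_x]
  have c3 : Coalgebra.comul (R := k) (B 3) = B 3 ⊗ₜ[k] B 1 + B 0 ⊗ₜ[k] B 3 := by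
    rw [hs.basis3, hs.basis1, hs.basis0, hs.comul_gx]
  obtain ⟨p, q, r, s, hux⟩ : ∃ p q r s : k, u x = p • B 0 + q • B 1 + r • B 2 + s • B 3 :=
    ⟨_, _, _, _, by rw [hs.basis0, hs.basis1, hs.basis2, hs.basis3]; exact hs.expand (u x)⟩
  have hcx : Coalgebra.comul (R := k) (p • B 0 + q • B 1 + r • B 2 + s • B 3) =
      (p • B 0 + q • B 1 + r • B 2 + s • B 3) ⊗ₜ[k] B 0 +
        B 0 ⊗ₜ[k] (p • B 0 + q • B 1 + r • B 2 + s • B 3) := by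
    rw [← hux, hs.basis0]
    have := LinearMap.congr_fun hcm x
    simpa [hs.comul_x, hu1, hug] using this
  have ext : ∀ p q : Fin 4, _ := fun p q =>
    congrArg (fun z => (B.tensorProduct B).repr z (p, q)) hcx
  have e00 := ext 0 0
  have e11 := ext 1 1
  have e12 := ext 1 2
  have e31 := ext 3 1
  simp only [map_add, map_smul, c0, c1, c2, c3, add_tmul, tmul_add, smul_tmul', tmul_smul,
    Module.Basis.tensorProduct_repr_tmul_apply, Module.Basis.repr_self_apply, Finsupp.add_apply,
    Finsupp.smul_apply, smul_eq_mul, Fin.reduceEq, reduceIte, if_true, if_false, mul_zero,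
    zero_mul, mul_one, one_mul, add_zero, zero_add] at e00 e11 e12 e31
  have hp : p = 0 := by linear_combination -e00
  rw [hux, hp, e11, e12, e31]
  simp

set_option maxHeartbeats 1000000 in
lemma ux_of_ug_g (hs : IsSweedler k H g x) (u : H →ₗ[k] H) (hu1 : u 1 = 1)
    (hug : u g = g) (hchar : (2 : k) ≠ 0) (hxx : u x * u x = 0)
    (hc : IsCoalgebraMap k u) : ∃ β : k, u x = β • x := by
  obtain ⟨hcu, hcm⟩ := hc
  set B := hs.basis with hB
  have c0 : Coalgebra.comul (R := k) (B 0) = B 0 ⊗ₜ[k] B 0 := by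
    rw [hs.basis0, Bialgebra.comul_one, Algebra.TensorProduct.one_def]
  have c1 : Coalgebra.comul (R := k) (B 1) = B 1 ⊗ₜ[k] B 1 := by
    rw [hs.basis1, hs.comul_g]
  have c2 : Coalgebra.comul (R := k) (B 2) = B 2 ⊗ₜ[k] B 0 + B 1 ⊗ₜ[k] B 2 := by
    rw [hs.basis2, hs.basis1, hs.basis0, hs.comul_x]
  have c3 : Coalgebra.comul (R := k) (B 3) = B 3 ⊗ₜ[k] B 1 + B 0 ⊗ₜ[k] B 3 := by
    rw [hs.basis3, hs.basis1, hs.basis0, hs.comul_gx]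
  obtain ⟨p, q, r, s, hux⟩ : ∃ p q r s : k, u x = p • B 0 + q • B 1 + r • B 2 + s • B 3 :=
    ⟨_, _, _, _, by rw [hs.basis0, hs.basis1, hs.basis2, hs.basis3]; exact hs.expand (u x)⟩
  have hcx : Coalgebra.comul (R := k) (p • B 0 + q • B 1 + r • B 2 + s • B 3) =
      (p • B 0 + q • B 1 + r • B 2 + s • B 3) ⊗ₜ[k] B 0 +
        B 1 ⊗ₜ[k] (p • B 0 + q • B 1 + r • B 2 + s • B 3) := by
    rw [← hux, hs.basis0, hs.basis1]
    have := LinearMap.congr_fun hcm x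
    simpa [hs.comul_x, hu1, hug] using this
  have ext : ∀ p q : Fin 4, _ := fun p q =>
    congrArg (fun z => (B.tensorProduct B).repr z (p, q)) hcx
  have e10 := ext 1 0
  have e30 := ext 3 0
  simp only [map_add, map_smul, c0, c1, c2, c3, add_tmul, tmul_add, smul_tmul', tmul_smul,
    Module.Basis.tensorProduct_repr_tmul_apply, Module.Basis.repr_self_apply, Finsupp.add_apply,
    Finsupp.smul_apply, smul_eq_mul, Fin.reduceEq, reduceIte, if_true, if_false, mul_zero,
    zero_mul, mul_one, one_mul, add_zero, zero_add] at e10 e30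
  have hq : q = -p := by linear_combination -e10
  have hs0 : s = 0 := by linear_combination -e30
  have hux' : u x = p • (1 : H) + (-p) • g + r • x + (0 : k) • (g * x) := by
    rw [hux, hq, hs0, hs.basis0, hs.basis1, hs.basis2, hs.basis3]
  have hprod : (p • (1 : H) + (-p) • g + r • x + (0 : k) • (g * x)) *
      (p • (1 : H) + (-p) • g + r • x + (0 : k) • (g * x)) =
      (2 * (p * p)) • (1 : H) + (-(2 * (p * p))) • g + (2 * (p * r)) • x + (0 : k) • (g * x) := by
    simp only [add_mul, mul_add, smul_mul_assoc, mul_smul_comm, smul_smul, hs.x_sq, hs.g_sq,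
      hs.x_mul_g, hs.g_gx, hs.x_gx, mul_one, one_mul, smul_zero, zero_smul, add_zero,
      smul_neg, neg_smul, neg_neg, mul_neg, neg_mul]
    module
  have hzero : (2 * (p * p)) • (1 : H) + (-(2 * (p * p))) • g + (2 * (p * r)) • x +
      (0 : k) • (g * x) = (0 : k) • (1 : H) + (0 : k) • g + (0 : k) • x + (0 : k) • (g * x) := by
    rw [← hprod, ← hux', hxx]
    simp
  obtain ⟨h1, -, -, -⟩ := hs.coeffs_eq hzero
  have hpp : p * p = 0 := by
    rcases mul_eq_zero.mp h1 with h | h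
    · exact absurd h hchar
    · exact h
  have hp : p = 0 := by
    rcases mul_eq_zero.mp hpp with h | h <;> exact h
  exact ⟨r, by rw [hux', hp]; simp⟩

lemma forward (hchar : (2 : k) ≠ 0) (hs : IsSweedler k H g x) (u : H →ₗ[k] H)
    (hu1 : u 1 = 1) (hmul : ∀ a b : H, u (a * b) = u a * u b) (hc : IsCoalgebraMap k u) :
    (∀ h : H, u h = Coalgebra.counit (R := k) h • (1 : H)) ∨
      ∃ β : k, u 1 = 1 ∧ u g = g ∧ u x = β • x ∧ u (g * x) = β • (g * x) := by
  rcases hs.ug_cases u hu1 hc with hug | hug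
  · left
    have hux : u x = 0 := hs.ux_of_ug_one u hu1 hug hchar hc
    have hE : u = (Coalgebra.counit (R := k) (A := H)).smulRight (1 : H) := by
      refine hs.basis.ext fun i => ?_
      fin_cases i <;>
        simp [hs.basis0, hs.basis1, hs.basis2, hs.basis3, hu1, hug, hux, hmul g x,
          hs.counit_g, hs.counit_x, hs.counit_gx]
    intro h
    rw [hE, LinearMap.smulRight_apply]
  · right
    have hxx : u x * u x = 0 := by rw [← hmul, hs.x_sq, map_zero]
    obtain ⟨β, hux⟩ := hs.ux_of_ug_g u hu1 hug hchar hxx hc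
    exact ⟨β, hu1, hug, hux, by rw [hmul g x, hug, hux, mul_smul_comm]⟩

end IsSweedler

/-- A linear map `u : H₄ → H₄` is a Hopf algebra morphism (equivalently, a bialgebra
morphism: a unital algebra morphism which is also a coalgebra morphism) if and only if
either `u` is the trivial morphism `u(h) = ε(h)1`, or there exists `β ∈ k` such that
`u(1) = 1`, `u(g) = g`, `u(x) = βx` and `u(gx) = βgx`. -/
theorem sweedler_hopf_algebra_maps
    {k : Type*} [Field k] (hchar : (2 : k) ≠ 0) {H : Type*} [Ring H] [HopfAlgebra k H]
    {g x : H} (hs : IsSweedler k H g x) (u : H →ₗ[k] H) :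
    (u 1 = 1 ∧ (∀ a b : H, u (a * b) = u a * u b) ∧ IsCoalgebraMap k u) ↔
      ((∀ h : H, u h = Coalgebra.counit (R := k) h • (1 : H)) ∨
        ∃ β : k, u 1 = 1 ∧ u g = g ∧ u x = β • x ∧ u (g * x) = β • (g * x)) := by
  constructor
  · rintro ⟨hu1, hmul, hc⟩
    exact IsSweedler.forward hchar hs u hu1 hmul hc
  · exact IsSweedler.reverse hs u

end
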